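/- Let (B, S) be a 3-partition instance with S = (k_1, …, k_{3m}) and Σ k_j = mB, B/4 < k_j < B/2. Define Ã_{B,S} = ⋀_{i=1}^{m} (d_{i+1} = d_i + B + 1) : ⊛_{i=1}^{m+1} array(d_i, d_i), and B̃_{B,S} = ⋀_{i=1}^{m} (d_{i+1} > d_i) ∧ ⋀_{j=1}^{3m} (d_1 ≤ a_j ∧ a_j + k_j < d_{m+1}) : ⊛_{i=1}^{m+1} array(d_i, d_i) * ⊛_{j=1}^{3m} array(a_j+1, a_j+k_j), and let A_{B,S} = ⋀_{i=1}^{m} (d_{i+1} = d_i + B + 1) ∧ ⋀_{j=1}^{3m} (d_1 ≤ a_j ∧ a_j + k_j < d_{m+1}) : ⊛_{i=1}^{m+1} array(d_i, d_i) * ⊛_{j=1}^{3m} array(a_j+1, a_j+k_j). Then the formulas β(Ã_{B,S}, B̃_{B,S}) and γ(A_{B,S}) are logically equivalent over ℕ: every stack satisfies one iff it satisfies the other. -/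

import Mathlib

/-! ## Array separation logic (ASL): syntax and stack-heap semantics -/

/-- Terms of array separation logic: variables (named by naturals), constants,
addition, and multiplication by a constant. -/
inductive Trm : Type where
  | var : ℕ → Trm
  | const : ℕ → Trm
  | add : Trm → Trm → Trm
  | smul : ℕ → Trm → Trm

/-- A stack maps variables to naturals. -/
abbrev Stack := ℕ → ℕ

/-- Evaluation of terms under a stack. -/
def Trm.eval (s : Stack) : Trm → ℕ
  | .var x => s x
  | .const n => n
  | .add t u => t.eval s + u.eval s
  | .smul n t => n * t.eval s

/-- Variables occurring in a term. -/
def Trm.vars : Trm → Set ℕ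
  | .var x => {x}
  | .const _ => ∅
  | .add t u => t.vars ∪ u.vars
  | .smul _ t => t.vars

/-- Pure formulas: conjunctions of atomic arithmetic constraints. -/
inductive PureF : Type where
  | tru : PureF
  | eq : Trm → Trm → PureF
  | ne : Trm → Trm → PureF
  | le : Trm → Trm → PureF
  | lt : Trm → Trm → PureF
  | and : PureF → PureF → PureF

/-- Satisfaction of pure formulas (depends only on the stack). -/
def PureF.sat (s : Stack) : PureF → Prop
  | .tru => True
  | .eq t u => t.eval s = u.eval s
  | .ne t u => t.eval s ≠ u.eval s
  | .le t u => t.eval s ≤ u.eval s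
  | .lt t u => t.eval s < u.eval s
  | .and p q => p.sat s ∧ q.sat s

def PureF.vars : PureF → Set ℕ
  | .tru => ∅
  | .eq t u => t.vars ∪ u.vars
  | .ne t u => t.vars ∪ u.vars
  | .le t u => t.vars ∪ u.vars
  | .lt t u => t.vars ∪ u.vars
  | .and p q => p.vars ∪ q.vars

/-- The (top-level) terms occurring in a pure formula. -/
def PureF.trms : PureF → List Trm
  | .tru => []
  | .eq t u => [t, u]
  | .ne t u => [t, u]
  | .le t u => [t, u]
  | .lt t u => [t, u]
  | .and p q => p.trms ++ q.trms

/-- The conjuncts of a pure formula. -/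
def PureF.conjuncts : PureF → List PureF
  | .and p q => p.conjuncts ++ q.conjuncts
  | p => [p]

/-- Finite conjunction. -/
def bigAnd : List PureF → PureF
  | [] => .tru
  | p :: ps => .and p (bigAnd ps)

/-- Spatial formulas: `emp`, points-to, arrays, and separating conjunction. -/
inductive Spatial : Type where
  | emp : Spatial
  | pto : Trm → Trm → Spatial
  | arr : Trm → Trm → Spatial
  | star : Spatial → Spatial → Spatial

/-- Heaps: finite partial functions from ℕ (locations) to ℕ (values). -/
abbrev Heap := Finmap (fun _ : ℕ => ℕ)

/-- Satisfaction of spatial formulas. -/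
def Spatial.sat (s : Stack) : Spatial → Heap → Prop
  | .emp, h => h = ∅
  | .pto t u, h =>
      h.keys = {Trm.eval s t} ∧ Finmap.lookup (Trm.eval s t) h = some (Trm.eval s u)
  | .arr t u, h =>
      Trm.eval s t ≤ Trm.eval s u ∧ h.keys = Finset.Icc (Trm.eval s t) (Trm.eval s u)
  | .star F G, h =>
      ∃ h₁ h₂ : Heap, h₁.Disjoint h₂ ∧ h = h₁ ∪ h₂ ∧ F.sat s h₁ ∧ G.sat s h₂

def Spatial.vars : Spatial → Set ℕ
  | .emp => ∅
  | .pto t u => t.vars ∪ u.vars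
  | .arr t u => t.vars ∪ u.vars
  | .star F G => F.vars ∪ G.vars

/-- The (top-level) terms occurring in a spatial formula. -/
def Spatial.trms : Spatial → List Trm
  | .emp => []
  | .pto t u => [t, u]
  | .arr t u => [t, u]
  | .star F G => F.trms ++ G.trms

/-- The points-to atoms of a spatial formula, as (address, value) pairs. -/
def Spatial.ptos : Spatial → List (Trm × Trm)
  | .emp => []
  | .pto t u => [(t, u)]
  | .arr _ _ => []
  | .star F G => F.ptos ++ G.ptos

/-- The array atoms of a spatial formula, as endpoint pairs. -/
def Spatial.arrs : Spatial → List (Trm × Trm)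
  | .emp => []
  | .pto _ _ => []
  | .arr t u => [(t, u)]
  | .star F G => F.arrs ++ G.arrs

/-- The arrays of the array abstraction `⟨A⟩`: each points-to `c ↦ d` is
replaced by the single-cell array `array(c,c)`. -/
def Spatial.absArrays : Spatial → List (Trm × Trm)
  | .emp => []
  | .pto t _ => [(t, t)]
  | .arr t u => [(t, u)]
  | .star F G => F.absArrays ++ G.absArrays

/-- Finite separating conjunction. -/
def bigStar : List Spatial → Spatial
  | [] => .emp
  | F :: Fs => .star F (bigStar Fs)

/-- Quantifier-free symbolic heaps `Π : F`. -/
structure SymHeap : Type where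
  pure : PureF
  spatial : Spatial

/-- Satisfaction of quantifier-free symbolic heaps. -/
def SymHeap.sat (s : Stack) (h : Heap) (A : SymHeap) : Prop :=
  A.pure.sat s ∧ A.spatial.sat s h

def SymHeap.vars (A : SymHeap) : Set ℕ := A.pure.vars ∪ A.spatial.vars

/-- All (top-level) terms occurring in a symbolic heap. -/
def SymHeap.trms (A : SymHeap) : List Trm := A.pure.trms ++ A.spatial.trms

/-- Lifting `*` to symbolic heaps: conjoin pure parts, `*`-conjoin spatial parts. -/
def SymHeap.star (A X : SymHeap) : SymHeap :=
  ⟨.and A.pure X.pure, .star A.spatial X.spatial⟩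

/-- Satisfiability of a symbolic heap. -/
def SymHeap.Satisfiable (A : SymHeap) : Prop := ∃ (s : Stack) (h : Heap), A.sat s h

/-- Semantic entailment between quantifier-free symbolic heaps. -/
def Entails (A B : SymHeap) : Prop := ∀ (s : Stack) (h : Heap), A.sat s h → B.sat s h

/-- Existentially quantified symbolic heaps `∃ z⃗. Π : F`. -/
structure QSymHeap : Type where
  bound : List ℕ
  body : SymHeap

/-- Satisfaction of quantified symbolic heaps: some extension of the stack on the
bound variables satisfies the body. -/
def QSymHeap.sat (s : Stack) (h : Heap) (B : QSymHeap) : Prop :=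
  ∃ s' : Stack, (∀ x : ℕ, x ∉ B.bound → s' x = s x) ∧ B.body.sat s' h

/-! ## The arithmetic encodings γ, β, φ, ψ₁, ψ₂, χ (interpreted over stacks) -/

/-- `s ⊨ γ(A)`: the Presburger satisfiability encoding of `A`, i.e. the pure part
of `A` together with well-definedness and pairwise disjointness of the arrays of
the array abstraction `⟨A⟩`. -/
def gammaSat (A : SymHeap) (s : Stack) : Prop :=
  A.pure.sat s ∧
  (∀ p ∈ A.spatial.absArrays, Trm.eval s p.1 ≤ Trm.eval s p.2) ∧
  A.spatial.absArrays.Pairwise (fun p q =>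
    Trm.eval s p.2 < Trm.eval s q.1 ∨ Trm.eval s q.2 < Trm.eval s p.1)

/-- `s ⊨ β(A,B)`. -/
def betaSat (A B : SymHeap) (s : Stack) : Prop :=
  gammaSat A s ∧ gammaSat B s ∧
  (∀ p ∈ B.spatial.ptos, ∀ q ∈ A.spatial.arrs,
      Trm.eval s p.1 < Trm.eval s q.1 ∨ Trm.eval s p.1 > Trm.eval s q.2) ∧
  (∀ p ∈ A.spatial.ptos, ∀ q ∈ B.spatial.ptos,
      Trm.eval s p.1 ≠ Trm.eval s q.1 ∨ Trm.eval s p.2 = Trm.eval s q.2)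

/-- The term set `Terms(A,B)`: all terms occurring in `A` and `B`, together with
the successor terms `b_i + 1`, `d_i + 1` (array right endpoints) and
`t_i + 1`, `v_i + 1` (points-to addresses). -/
def termSet (A B : SymHeap) : List Trm :=
  A.trms ++ B.trms ++
  (A.spatial.arrs.map fun p => Trm.add p.2 (Trm.const 1)) ++
  (B.spatial.arrs.map fun p => Trm.add p.2 (Trm.const 1)) ++
  (A.spatial.ptos.map fun p => Trm.add p.1 (Trm.const 1)) ++
  (B.spatial.ptos.map fun p => Trm.add p.1 (Trm.const 1))

/-- A solution seed for the biabduction instance `(A,B)`. -/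
def IsSolutionSeed (A B : SymHeap) (Δ : PureF) : Prop :=
  (∃ s : Stack, Δ.sat s) ∧
  (∀ s : Stack, Δ.sat s → betaSat A B s) ∧
  (∀ δ ∈ Δ.conjuncts, ∃ t ∈ termSet A B, ∃ u ∈ termSet A B,
      δ = PureF.lt t u ∨ δ = PureF.eq t u) ∧
  (∀ t ∈ termSet A B, ∀ u ∈ termSet A B, ∃ δ ∈ Δ.conjuncts,
      δ = PureF.lt t u ∨ δ = PureF.lt u t ∨ δ = PureF.eq t u)

/-- The (quantifier-free) biabduction problem `(A,B)` has a solution. -/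
def HasBiabductionSolution (A B : SymHeap) : Prop :=
  ∃ X Y : SymHeap, (A.star X).Satisfiable ∧ Entails (A.star X) (B.star Y)

/-- `s ⊨ φ(A,B)` (over the array abstractions of `A` and `B`). -/
def phiSat (A B : SymHeap) (s : Stack) : Prop :=
  ∃ x : ℕ,
    (∃ p ∈ A.spatial.absArrays, Trm.eval s p.1 ≤ x ∧ x ≤ Trm.eval s p.2) ∧
    ∀ q ∈ B.spatial.absArrays, x < Trm.eval s q.1 ∨ x > Trm.eval s q.2

/-- `s ⊨ ψ₁(A,B)`: some points-to address of `B` is covered by an array of `A`. -/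
def psi1Sat (A B : SymHeap) (s : Stack) : Prop :=
  ∃ p ∈ A.spatial.arrs, ∃ q ∈ B.spatial.ptos,
    Trm.eval s p.1 ≤ Trm.eval s q.1 ∧ Trm.eval s q.1 ≤ Trm.eval s p.2

/-- `s ⊨ ψ₂(A,B)`: some pointers of `A` and `B` share an address but disagree on
their contents. -/
def psi2Sat (A B : SymHeap) (s : Stack) : Prop :=
  ∃ p ∈ A.spatial.ptos, ∃ q ∈ B.spatial.ptos,
    Trm.eval s p.1 = Trm.eval s q.1 ∧ Trm.eval s p.2 ≠ Trm.eval s q.2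

/-- `s ⊨ χ(A, ∃z⃗.Q)`. -/
def chiSat (A : SymHeap) (zs : List ℕ) (Q : SymHeap) (s : Stack) : Prop :=
  gammaSat A s ∧
  ∀ s' : Stack, (∀ x : ℕ, x ∉ zs → s' x = s x) →
    (¬ gammaSat Q s' ∨ phiSat A Q s' ∨ phiSat Q A s' ∨
      psi1Sat A Q s' ∨ psi2Sat A Q s')

/-! ### The 3-partition reduction. Variables: `d_{i+1}` is `var i` for `i ∈ [0,m]`,
and `a_{j+1}` is `var (m+1+j)` for `j ∈ [0,3m)`. -/

/-- The symbolic heap `A_{B,S}`: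
`⋀_{i=1}^{m} (d_{i+1} = dᵢ + B + 1) ∧ ⋀_{j=1}^{3m} (d₁ ≤ aⱼ ∧ aⱼ + kⱼ < d_{m+1})
 : ⊛_{i=1}^{m+1} array(dᵢ,dᵢ) * ⊛_{j=1}^{3m} array(aⱼ+1, aⱼ+kⱼ)`. -/
def heapABS (m B : ℕ) (k : Fin (3 * m) → ℕ) : SymHeap :=
  ⟨PureF.and
      (bigAnd (List.ofFn fun i : Fin m =>
        PureF.eq (Trm.var (i.1 + 1)) (Trm.add (Trm.var i.1) (Trm.const (B + 1)))))
      (bigAnd (List.ofFn fun j : Fin (3 * m) =>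
        PureF.and (PureF.le (Trm.var 0) (Trm.var (m + 1 + j.1)))
          (PureF.lt (Trm.add (Trm.var (m + 1 + j.1)) (Trm.const (k j))) (Trm.var m)))),
   Spatial.star
      (bigStar (List.ofFn fun i : Fin (m + 1) => Spatial.arr (Trm.var i.1) (Trm.var i.1)))
      (bigStar (List.ofFn fun j : Fin (3 * m) =>
        Spatial.arr (Trm.add (Trm.var (m + 1 + j.1)) (Trm.const 1))
          (Trm.add (Trm.var (m + 1 + j.1)) (Trm.const (k j)))))⟩

/-- The symbolic heap `Ã_{B,S}`:
`⋀_{i=1}^{m} (d_{i+1} = dᵢ + B + 1) : ⊛_{i=1}^{m+1} array(dᵢ,dᵢ)`. -/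
def heapAtil (m B : ℕ) : SymHeap :=
  ⟨bigAnd (List.ofFn fun i : Fin m =>
      PureF.eq (Trm.var (i.1 + 1)) (Trm.add (Trm.var i.1) (Trm.const (B + 1)))),
   bigStar (List.ofFn fun i : Fin (m + 1) => Spatial.arr (Trm.var i.1) (Trm.var i.1))⟩

/-- The symbolic heap `B̃_{B,S}`:
`⋀_{i=1}^{m} (d_{i+1} > dᵢ) ∧ ⋀_{j=1}^{3m} (d₁ ≤ aⱼ ∧ aⱼ + kⱼ < d_{m+1})
 : ⊛_{i=1}^{m+1} array(dᵢ,dᵢ) * ⊛_{j=1}^{3m} array(aⱼ+1, aⱼ+kⱼ)`. -/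
def heapBtil (m : ℕ) (k : Fin (3 * m) → ℕ) : SymHeap :=
  ⟨PureF.and
      (bigAnd (List.ofFn fun i : Fin m => PureF.lt (Trm.var i.1) (Trm.var (i.1 + 1))))
      (bigAnd (List.ofFn fun j : Fin (3 * m) =>
        PureF.and (PureF.le (Trm.var 0) (Trm.var (m + 1 + j.1)))
          (PureF.lt (Trm.add (Trm.var (m + 1 + j.1)) (Trm.const (k j))) (Trm.var m)))),
   Spatial.star
      (bigStar (List.ofFn fun i : Fin (m + 1) => Spatial.arr (Trm.var i.1) (Trm.var i.1)))
      (bigStar (List.ofFn fun j : Fin (3 * m) =>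
        Spatial.arr (Trm.add (Trm.var (m + 1 + j.1)) (Trm.const 1))
          (Trm.add (Trm.var (m + 1 + j.1)) (Trm.const (k j)))))⟩

/-- A complete 3-partition of `S = (k₁,…,k_{3m})` w.r.t. `B`: a partition of the
indices into `m` groups of three, each of whose `k`-values sums to `B`. -/
def HasThreePartition (m B : ℕ) (k : Fin (3 * m) → ℕ) : Prop :=
  ∃ f : Fin (3 * m) → Fin m, ∀ i : Fin m,
    (Finset.univ.filter fun j => f j = i).card = 3 ∧
    ∑ j ∈ Finset.univ.filter (fun j => f j = i), k j = B


lemma bigAnd_sat (s : Stack) (L : List PureF) :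
    (bigAnd L).sat s ↔ ∀ p ∈ L, p.sat s := by
  induction L with
  | nil => simp [bigAnd, PureF.sat]
  | cons a l ih => simp [bigAnd, PureF.sat, ih]

lemma absArrays_bigStar_map {α : Type*} (f g : α → Trm) (l : List α) :
    (bigStar (l.map fun x => Spatial.arr (f x) (g x))).absArrays
      = l.map fun x => (f x, g x) := by
  induction l with
  | nil => simp [bigStar, Spatial.absArrays]
  | cons a l ih => simp [bigStar, Spatial.absArrays, ih]

lemma ptos_bigStar_map {α : Type*} (f g : α → Trm) (l : List α) :
    (bigStar (l.map fun x => Spatial.arr (f x) (g x))).ptos = [] := by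
  induction l with
  | nil => simp [bigStar, Spatial.ptos]
  | cons a l ih => simp [bigStar, Spatial.ptos, ih]

lemma absArrays_ofFn_arr {n : ℕ} (f g : Fin n → Trm) :
    (bigStar (List.ofFn fun i => Spatial.arr (f i) (g i))).absArrays
      = List.ofFn fun i => (f i, g i) := by
  rw [List.ofFn_eq_map, List.ofFn_eq_map, ← absArrays_bigStar_map]

lemma ptos_ofFn_arr {n : ℕ} (f g : Fin n → Trm) :
    (bigStar (List.ofFn fun i => Spatial.arr (f i) (g i))).ptos = [] := by
  rw [List.ofFn_eq_map, ← ptos_bigStar_map]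

/-- The Presburger equivalence `β(Ã_{B,S}, B̃_{B,S}) ≡ γ(A_{B,S})`:
every stack satisfies one iff it satisfies the other. -/
theorem stmt_11 (m B : ℕ) (k : Fin (3 * m) → ℕ)
    (hsum : ∑ j, k j = m * B)
    (hbound : ∀ j, B < 4 * k j ∧ 2 * k j < B)
    (s : Stack) :
    betaSat (heapAtil m B) (heapBtil m k) s ↔ gammaSat (heapABS m B k) s := by
  -- Unfold the spatial structure once and for all.
  have hAtilArr : (heapAtil m B).spatial.absArrays
      = List.ofFn (fun i : Fin (m+1) => (Trm.var i.1, Trm.var i.1)) := by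
    exact absArrays_ofFn_arr _ _
  have hAtilPtos : (heapAtil m B).spatial.ptos = [] := by
    exact ptos_ofFn_arr _ _
  have hBtilPtos : (heapBtil m k).spatial.ptos = [] := by
    simp only [heapBtil, Spatial.ptos, ptos_ofFn_arr, List.append_nil]
  -- The spatial parts of `heapBtil` and `heapABS` are identical.
  have hspatial : (heapBtil m k).spatial = (heapABS m B k).spatial := rfl
  constructor
  · rintro ⟨⟨hApure, _, _⟩, ⟨hBpure, hBwd, hBpw⟩, -, -⟩
    refine ⟨⟨?_, hBpure.2⟩, ?_, ?_⟩
    · -- pure part: the equalities, from Ã's pure part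
      simpa [heapABS, heapAtil] using hApure
    · simpa [hspatial] using hBwd
    · simpa [hspatial] using hBpw
  · rintro ⟨⟨heq, hbnd⟩, hwd, hpw⟩
    have heq' : ∀ i : Fin m, s (i.1 + 1) = s i.1 + (B + 1) := by
      have := (bigAnd_sat s _).mp heq
      intro i
      have := this _ (List.mem_ofFn.mpr ⟨i, rfl⟩)
      simpa [PureF.sat, Trm.eval] using this
    have hwdA : ∀ p ∈ (heapABS m B k).spatial.absArrays,
        Trm.eval s p.1 ≤ Trm.eval s p.2 := hwd
    have hpwA := hpw
    have habs : (heapABS m B k).spatial.absArrays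
        = (List.ofFn fun i : Fin (m+1) => (Trm.var i.1, Trm.var i.1)) ++
          (List.ofFn fun j : Fin (3*m) =>
            (Trm.add (Trm.var (m + 1 + j.1)) (Trm.const 1),
             Trm.add (Trm.var (m + 1 + j.1)) (Trm.const (k j)))) := by
      simp only [heapABS, Spatial.absArrays, absArrays_ofFn_arr]
    refine ⟨⟨heq, ?_, ?_⟩, ⟨⟨?_, hbnd⟩, ?_, ?_⟩, ?_, ?_⟩
    · -- well-definedness of Ã's arrays: trivial, endpoints equal
      rw [hAtilArr]
      intro p hp
      obtain ⟨i, rfl⟩ := List.mem_ofFn.mp hp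
      simp
    · -- pairwise for Ã's arrays: restriction of the pairwise for A
      rw [hAtilArr]
      rw [habs] at hpwA
      exact (List.pairwise_append.mp hpwA).1
    · -- the strict inequalities dᵢ < d_{i+1}
      rw [bigAnd_sat]
      intro p hp
      obtain ⟨i, rfl⟩ := List.mem_ofFn.mp hp
      have := heq' i
      simp only [PureF.sat, Trm.eval]
      omega
    · simpa [hspatial] using hwdA
    · simpa [hspatial] using hpwA
    · simp [hBtilPtos]
    · simp [hAtilPtos]
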